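/- The Jacobi identity for theta functions: θ'(0,τ) = π · θ₁(0,τ) · θ₂(0,τ) · θ₃(0,τ), where θ'(0,τ) denotes the derivative of θ(v,τ) in v evaluated at v=0. -/

import Mathlib

open Complex

/-- The nome `q = e^{2πiτ}`. -/
noncomputable def jq (τ : ℂ) : ℂ := Complex.exp (2 * Real.pi * Complex.I * τ)

/-- Jacobi theta function `θ(v,τ)` defined by its infinite product. -/
noncomputable def jtheta (v τ : ℂ) : ℂ :=
  2 * Complex.exp (Real.pi * Complex.I * τ / 4) * Complex.sin (Real.pi * v) *
    ∏' n : ℕ, ((1 - jq τ ^ (n + 1)) *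
      (1 - Complex.exp (2 * Real.pi * Complex.I * v) * jq τ ^ (n + 1)) *
      (1 - Complex.exp (-(2 * Real.pi * Complex.I * v)) * jq τ ^ (n + 1)))

/-- Jacobi theta function `θ₁(v,τ)` defined by its infinite product. -/
noncomputable def jtheta1 (v τ : ℂ) : ℂ :=
  2 * Complex.exp (Real.pi * Complex.I * τ / 4) * Complex.cos (Real.pi * v) *
    ∏' n : ℕ, ((1 - jq τ ^ (n + 1)) *
      (1 + Complex.exp (2 * Real.pi * Complex.I * v) * jq τ ^ (n + 1)) *
      (1 + Complex.exp (-(2 * Real.pi * Complex.I * v)) * jq τ ^ (n + 1)))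

/-- Jacobi theta function `θ₂(v,τ)` defined by its infinite product;
`q^{j-1/2} = e^{πiτ(2j-1)}`. -/
noncomputable def jtheta2 (v τ : ℂ) : ℂ :=
  ∏' n : ℕ, ((1 - jq τ ^ (n + 1)) *
    (1 - Complex.exp (2 * Real.pi * Complex.I * v) *
      Complex.exp (Real.pi * Complex.I * τ) ^ (2 * n + 1)) *
    (1 - Complex.exp (-(2 * Real.pi * Complex.I * v)) *
      Complex.exp (Real.pi * Complex.I * τ) ^ (2 * n + 1)))

/-- Jacobi theta function `θ₃(v,τ)` defined by its infinite product. -/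
noncomputable def jtheta3 (v τ : ℂ) : ℂ :=
  ∏' n : ℕ, ((1 - jq τ ^ (n + 1)) *
    (1 + Complex.exp (2 * Real.pi * Complex.I * v) *
      Complex.exp (Real.pi * Complex.I * τ) ^ (2 * n + 1)) *
    (1 + Complex.exp (-(2 * Real.pi * Complex.I * v)) *
      Complex.exp (Real.pi * Complex.I * τ) ^ (2 * n + 1)))


open Filter Topology

lemma jac_logb {z : ℂ} {r : ℝ} (hz : ‖z‖ ≤ r) (hr : r < 1) :
    ‖Complex.log (1 + z)‖ ≤ (r * (1 - r)⁻¹ / 2 + 1) * ‖z‖ := by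
  have hz1 : ‖z‖ < 1 := lt_of_le_of_lt hz hr
  have h := Complex.norm_log_one_add_le hz1
  have h0 : (0:ℝ) ≤ r := le_trans (norm_nonneg z) hz
  have h1 : (0:ℝ) < 1 - r := by linarith
  have h2 : (1-‖z‖)⁻¹ ≤ (1-r)⁻¹ := by
    apply inv_anti₀ h1; linarith
  have h3 : (0:ℝ) ≤ (1-‖z‖)⁻¹ := by
    rw [inv_nonneg]; linarith
  calc ‖Complex.log (1+z)‖ ≤ ‖z‖^2 * (1-‖z‖)⁻¹/2 + ‖z‖ := h
    _ ≤ ‖z‖ * r * (1-r)⁻¹/2 + ‖z‖ := by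
        rw [sq]
        gcongr
    _ = (r * (1-r)⁻¹/2 + 1) * ‖z‖ := by ring

lemma jac_sumlog {x : ℕ → ℂ} (hx : Summable x) :
    Summable (fun n => Complex.log (1 + x n)) := by
  have h0 : Tendsto (fun n => ‖x n‖) atTop (𝓝 0) := hx.norm.tendsto_atTop_zero
  have hev : ∀ᶠ n in atTop, ‖Complex.log (1 + x n)‖ ≤ (3/2) * ‖x n‖ := by
    filter_upwards [h0.eventually_le_const (by norm_num : (0:ℝ) < 1/2)] with n hn
    exact Complex.norm_log_one_add_half_le_self hn
  exact Summable.of_norm_bounded_eventually_nat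
    (hx.norm.mul_left (3/2)) hev

lemma jac_ne {x : ℂ} (h : ‖x‖ < 1) : 1 + x ≠ 0 := by
  intro hc
  rw [eq_neg_of_add_eq_zero_right hc] at h
  simp at h

lemma jac_mult {x : ℕ → ℂ} (hx : Summable x) (hb : ∀ n, ‖x n‖ < 1) :
    Multipliable (fun n => 1 + x n) :=
  Complex.multipliable_of_summable_log (jac_sumlog hx)

lemma jac_prode {x : ℕ → ℂ} (hx : Summable x) (hb : ∀ n, ‖x n‖ < 1) :
    (∏' n, (1 + x n)) = Complex.exp (∑' n, Complex.log (1 + x n)) :=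
  (Complex.cexp_tsum_eq_tprod (f := fun n => 1 + x n)
    (fun n => jac_ne (hb n)) (jac_sumlog hx)).symm

lemma jac_prodne {x : ℕ → ℂ} (hx : Summable x) (hb : ∀ n, ‖x n‖ < 1) :
    (∏' n, (1 + x n)) ≠ 0 := by
  rw [jac_prode hx hb]; exact Complex.exp_ne_zero _

lemma jac_sgeo {w : ℂ} (hw : ‖w‖ < 1) (c : ℂ) (k m : ℕ) (hk : 1 ≤ k) :
    Summable (fun n : ℕ => c * w ^ (k * n + m)) := by
  have h1 : ‖w ^ k‖ < 1 := by
    rw [norm_pow]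
    calc ‖w‖ ^ k ≤ ‖w‖ ^ 1 := pow_le_pow_of_le_one (norm_nonneg _) hw.le hk
      _ = ‖w‖ := pow_one _
      _ < 1 := hw
  have := (summable_geometric_of_norm_lt_one h1).mul_left (c * w ^ m)
  refine this.congr fun n => ?_
  rw [← pow_mul, mul_assoc, ← pow_add, Nat.add_comm]

lemma jac_nlt {w : ℂ} (hw : ‖w‖ < 1) {c : ℂ} {r : ℝ} (hc : ‖c‖ ≤ r)
    (hr : r * ‖w‖ ≤ 1) {m : ℕ} (hm : 2 ≤ m) : ‖c * w ^ m‖ ≤ ‖w‖ ^ (m - 1) := by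
  have h0 : (0:ℝ) ≤ r := le_trans (norm_nonneg c) hc
  have : m = (m - 1) + 1 := by omega
  rw [norm_mul, norm_pow, this, pow_succ]
  calc ‖c‖ * (‖w‖ ^ (m-1) * ‖w‖) ≤ r * (‖w‖ ^ (m-1) * ‖w‖) := by
        gcongr
    _ = ‖w‖ ^ (m-1) * (r * ‖w‖) := by ring
    _ ≤ ‖w‖ ^ (m-1) * 1 := by gcongr
    _ = ‖w‖ ^ (m-1) := mul_one _

lemma jac_pow_lt {w : ℂ} (hw : ‖w‖ < 1) {m : ℕ} (hm : 1 ≤ m) : ‖w ^ m‖ < 1 := by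
  rw [norm_pow]
  calc ‖w‖ ^ m ≤ ‖w‖ ^ 1 := pow_le_pow_of_le_one (norm_nonneg _) hw.le hm
    _ = ‖w‖ := pow_one _
    _ < 1 := hw

-- Euler: ∏(1+w^{2n+2}) ∏(1-w^{2n+1}) ∏(1+w^{2n+1}) = 1
lemma jac_euler {w : ℂ} (hw : ‖w‖ < 1) :
    (∏' n : ℕ, (1 + w ^ (2*n+2))) * (∏' n : ℕ, (1 - w ^ (2*n+1)))
      * (∏' n : ℕ, (1 + w ^ (2*n+1))) = 1 := by
  -- summability
  have s1 : Summable (fun n : ℕ => w ^ (n+1)) := by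
    simpa using jac_sgeo hw 1 1 1 le_rfl
  have s2 : Summable (fun n : ℕ => w ^ (2*n+1)) := by
    simpa using jac_sgeo hw 1 2 1 one_le_two
  have s3 : Summable (fun n : ℕ => w ^ (2*n+2)) := by
    simpa using jac_sgeo hw 1 2 2 one_le_two
  have b1 : ∀ n : ℕ, ‖w ^ (n+1)‖ < 1 := fun n => jac_pow_lt hw (by omega)
  have b2 : ∀ n : ℕ, ‖w ^ (2*n+1)‖ < 1 := fun n => jac_pow_lt hw (by omega)
  have b3 : ∀ n : ℕ, ‖w ^ (2*n+2)‖ < 1 := fun n => jac_pow_lt hw (by omega)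
  have nb1 : ∀ n : ℕ, ‖-w ^ (n+1)‖ < 1 := by simpa using b1
  have nb2 : ∀ n : ℕ, ‖-w ^ (2*n+1)‖ < 1 := by simpa using b2
  have nb3 : ∀ n : ℕ, ‖-w ^ (2*n+2)‖ < 1 := by simpa using b3
  -- multipliability
  have mA : Multipliable (fun n : ℕ => 1 + w ^ (n+1)) := jac_mult s1 b1
  have mAe : Multipliable (fun n : ℕ => 1 + w ^ (2*n+2)) := jac_mult s3 b3
  have mAo : Multipliable (fun n : ℕ => 1 + w ^ (2*n+1)) := jac_mult s2 b2
  have mD : Multipliable (fun n : ℕ => 1 - w ^ (n+1)) := by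
    simpa [sub_eq_add_neg] using jac_mult s1.neg nb1
  have mDe : Multipliable (fun n : ℕ => 1 - w ^ (2*n+2)) := by
    simpa [sub_eq_add_neg] using jac_mult s3.neg nb3
  have mDo : Multipliable (fun n : ℕ => 1 - w ^ (2*n+1)) := by
    simpa [sub_eq_add_neg] using jac_mult s2.neg nb2
  -- nonvanishing of D
  have hDne : (∏' n : ℕ, (1 - w ^ (n+1))) ≠ 0 := by
    have := jac_prodne s1.neg nb1
    simpa [sub_eq_add_neg] using this
  -- (i) even/odd for 1+
  have h1 : (∏' k : ℕ, (1 + w ^ (2*k+1))) * (∏' k : ℕ, (1 + w ^ (2*k+2)))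
      = ∏' n : ℕ, (1 + w ^ (n+1)) := by
    have ho : Multipliable (fun k : ℕ => 1 + w ^ (2*k+1+1)) := mAe
    have := tprod_even_mul_odd (f := fun n => 1 + w ^ (n+1)) mAo ho
    rw [← this]
  -- (ii) even/odd for 1-
  have h2 : (∏' k : ℕ, (1 - w ^ (2*k+1))) * (∏' k : ℕ, (1 - w ^ (2*k+2)))
      = ∏' n : ℕ, (1 - w ^ (n+1)) := by
    have ho : Multipliable (fun k : ℕ => 1 - w ^ (2*k+1+1)) := mDe
    have := tprod_even_mul_odd (f := fun n => 1 - w ^ (n+1)) mDo ho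
    rw [← this]
  -- (iii) pairing
  have h3 : (∏' n : ℕ, (1 + w ^ (n+1))) * (∏' n : ℕ, (1 - w ^ (n+1)))
      = ∏' n : ℕ, (1 - w ^ (2*n+2)) := by
    rw [← Multipliable.tprod_mul mA mD]
    exact tprod_congr fun n => by
      have : (1 + w ^ (n+1)) * (1 - w ^ (n+1)) = 1 - (w ^ (n+1)) ^ 2 := by ring
      rw [this, ← pow_mul]
      congr 2
      omega
  -- combine
  apply mul_right_cancel₀ hDne
  rw [one_mul]
  calc (∏' n : ℕ, (1 + w ^ (2*n+2))) * (∏' n : ℕ, (1 - w ^ (2*n+1)))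
        * (∏' n : ℕ, (1 + w ^ (2*n+1))) * (∏' n : ℕ, (1 - w ^ (n+1)))
      = ((∏' k : ℕ, (1 + w ^ (2*k+1))) * (∏' k : ℕ, (1 + w ^ (2*k+2))))
        * (∏' n : ℕ, (1 - w ^ (n+1))) * (∏' n : ℕ, (1 - w ^ (2*n+1))) := by ring
    _ = ((∏' n : ℕ, (1 + w ^ (n+1))) * (∏' n : ℕ, (1 - w ^ (n+1))))
        * (∏' n : ℕ, (1 - w ^ (2*n+1))) := by rw [h1]
    _ = (∏' k : ℕ, (1 - w ^ (2*k+1))) * (∏' k : ℕ, (1 - w ^ (2*k+2))) := by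
        rw [h3]
        ring
    _ = ∏' n : ℕ, (1 - w ^ (n+1)) := h2

/-- Jacobi identity: `θ'(0,τ) = π θ₁(0,τ) θ₂(0,τ) θ₃(0,τ)`. -/
theorem jacobi_identity (τ : ℂ) (hτ : 0 < τ.im) :
    deriv (fun v => jtheta v τ) 0 =
      (Real.pi : ℂ) * jtheta1 0 τ * jtheta2 0 τ * jtheta3 0 τ := by
  have hpi := Real.pi_pos
  set w : ℂ := Complex.exp (Real.pi * Complex.I * τ) with hw_def
  set E : ℂ := Complex.exp (Real.pi * Complex.I * τ / 4) with hE_def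
  set r : ℝ := ‖w‖ with hr_def
  have hrpos : 0 < r := norm_pos_iff.mpr (Complex.exp_ne_zero _)
  have hr1 : r < 1 := by
    rw [hr_def, hw_def, Complex.norm_exp, Real.exp_lt_one_iff]
    have hre : ((Real.pi : ℂ) * I * τ).re = -(Real.pi * τ.im) := by
      simp [Complex.mul_re, Complex.mul_im]
    rw [hre]
    nlinarith
  have hq : jq τ = w ^ 2 := by
    rw [jq, sq, hw_def, ← Complex.exp_add]
    congr 1
    ring
  have hpow : ∀ n : ℕ, jq τ ^ (n + 1) = w ^ (2 * n + 2) := fun n => by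
    rw [hq, ← pow_mul]
    congr 1
  -- static products
  have s3 : Summable (fun n : ℕ => w ^ (2*n+2)) := by
    simpa using jac_sgeo hr1 1 2 2 one_le_two
  have s2 : Summable (fun n : ℕ => w ^ (2*n+1)) := by
    simpa using jac_sgeo hr1 1 2 1 one_le_two
  have b3 : ∀ n : ℕ, ‖w ^ (2*n+2)‖ < 1 := fun n => jac_pow_lt hr1 (by omega)
  have b2 : ∀ n : ℕ, ‖w ^ (2*n+1)‖ < 1 := fun n => jac_pow_lt hr1 (by omega)
  have nb3 : ∀ n : ℕ, ‖-w ^ (2*n+2)‖ < 1 := by simpa using b3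
  have nb2 : ∀ n : ℕ, ‖-w ^ (2*n+1)‖ < 1 := by simpa using b2
  have mP : Multipliable (fun n : ℕ => 1 - w ^ (2*n+2)) := by
    simpa [sub_eq_add_neg] using jac_mult s3.neg nb3
  have mA : Multipliable (fun n : ℕ => 1 + w ^ (2*n+2)) := jac_mult s3 b3
  have mB : Multipliable (fun n : ℕ => 1 - w ^ (2*n+1)) := by
    simpa [sub_eq_add_neg] using jac_mult s2.neg nb2
  have mC : Multipliable (fun n : ℕ => 1 + w ^ (2*n+1)) := jac_mult s2 b2
  -- the neighbourhood
  set ε : ℝ := Real.log r⁻¹ / (2 * Real.pi) with hε_def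
  have hεpos : 0 < ε := by
    apply div_pos
    · exact Real.log_pos (one_lt_inv_iff₀.mpr ⟨hrpos, hr1⟩)
    · positivity
  set s : Set ℂ := Metric.ball (0 : ℂ) ε with hs_def
  have hs_nhds : s ∈ 𝓝 (0 : ℂ) := Metric.ball_mem_nhds 0 hεpos
  have hs_neg : ∀ v ∈ s, -v ∈ s := by
    intro v hv
    rw [hs_def, mem_ball_zero_iff] at hv ⊢
    simpa using hv
  have hexp_le : ∀ v ∈ s, ‖Complex.exp (2 * (Real.pi:ℂ) * I * v)‖ ≤ r⁻¹ := by
    intro v hv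
    rw [hs_def, mem_ball_zero_iff] at hv
    have him : |v.im| < ε := lt_of_le_of_lt (Complex.abs_im_le_norm v) hv
    rw [Complex.norm_exp]
    have hre : (2 * (Real.pi:ℂ) * I * v).re = -(2 * Real.pi * v.im) := by
      simp [Complex.mul_re, Complex.mul_im]
    rw [hre, ← Real.exp_log (inv_pos.mpr hrpos)]
    apply Real.exp_le_exp.mpr
    have hlog : Real.log r⁻¹ = 2 * Real.pi * ε := by
      rw [hε_def]
      field_simp
    rw [hlog]
    have h1 : -v.im ≤ |v.im| := neg_le_abs v.im
    nlinarith
  -- norm bound for v-dependent factors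
  have hble : ∀ c : ℂ, ‖c‖ ≤ r⁻¹ → ∀ n : ℕ, ‖c * w ^ (2*n+2)‖ ≤ r ^ (2*n+1) := by
    intro c hc n
    have hmul : r⁻¹ * ‖w‖ ≤ 1 := by
      rw [← hr_def, inv_mul_cancel₀ (ne_of_gt hrpos)]
    have h := jac_nlt hr1 hc hmul (show 2 ≤ 2*n+2 by omega)
    rw [← hr_def] at h
    convert h using 2
    omega
  have hrpow : ∀ n : ℕ, r ^ (2*n+1) ≤ r := by
    intro n
    calc r ^ (2*n+1) ≤ r ^ 1 := pow_le_pow_of_le_one hrpos.le hr1.le (by omega)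
      _ = r := pow_one r
  -- key lemma for v-dependent products
  have key : ∀ c : ℂ, ‖c‖ ≤ r⁻¹ →
      Multipliable (fun n : ℕ => 1 - c * w ^ (2*n+2)) ∧
      (∏' n : ℕ, (1 - c * w ^ (2*n+2)))
        = Complex.exp (∑' n : ℕ, Complex.log (1 - c * w ^ (2*n+2))) := by
    intro c hc
    have hsum : Summable (fun n : ℕ => -(c * w ^ (2*n+2))) :=
      (jac_sgeo hr1 c 2 2 one_le_two).neg
    have hb : ∀ n : ℕ, ‖-(c * w ^ (2*n+2))‖ < 1 := by
      intro n
      rw [norm_neg]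
      calc ‖c * w ^ (2*n+2)‖ ≤ r ^ (2*n+1) := hble c hc n
        _ ≤ r := hrpow n
        _ < 1 := hr1
    constructor
    · simpa [sub_eq_add_neg] using jac_mult hsum hb
    · simpa [sub_eq_add_neg] using jac_prode hsum hb
  -- continuity of the v-dependent product
  set F : ℕ → ℂ → ℂ := fun n v =>
    Complex.log (1 - Complex.exp (2 * (Real.pi:ℂ) * I * v) * w ^ (2*n+2)) with hF_def
  set S : ℂ → ℂ := fun v => ∑' n : ℕ, F n v with hS_def
  set h : ℂ → ℂ := fun v =>
    ∏' n : ℕ, (1 - Complex.exp (2 * (Real.pi:ℂ) * I * v) * w ^ (2*n+2)) with hh_def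
  set K : ℝ := r * (1 - r)⁻¹ / 2 + 1 with hK_def
  have hKpos : 0 ≤ K := by
    rw [hK_def]
    have h1 : (0:ℝ) < 1 - r := by linarith
    positivity
  have hu : Summable (fun n : ℕ => K * r ^ (2*n+1)) := by
    have h2 : r ^ 2 < 1 := by nlinarith
    have := (summable_geometric_of_lt_one (by positivity) h2).mul_left (K * r)
    refine this.congr fun n => ?_
    rw [← pow_mul, mul_assoc, ← pow_succ']
  have hbound : ∀ (n : ℕ) (v : ℂ), v ∈ s → ‖F n v‖ ≤ K * r ^ (2*n+1) := by
    intro n v hv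
    have h1 := hble _ (hexp_le v hv) n
    have h2 : ‖-(Complex.exp (2 * (Real.pi:ℂ) * I * v) * w ^ (2*n+2))‖ ≤ r := by
      rw [norm_neg]; exact le_trans h1 (hrpow n)
    have h3 := jac_logb h2 hr1
    rw [hF_def]
    simp only []
    rw [sub_eq_add_neg]
    calc ‖Complex.log (1 + -(Complex.exp (2 * (Real.pi:ℂ) * I * v) * w ^ (2*n+2)))‖
        ≤ K * ‖-(Complex.exp (2 * (Real.pi:ℂ) * I * v) * w ^ (2*n+2))‖ := by
          rw [hK_def]; exact h3
      _ = K * ‖Complex.exp (2 * (Real.pi:ℂ) * I * v) * w ^ (2*n+2)‖ := by rw [norm_neg]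
      _ ≤ K * r ^ (2*n+1) := by gcongr
  have htuo := tendstoUniformlyOn_tsum hu hbound
  have hFcont : ∀ n : ℕ, ContinuousOn (F n) s := by
    intro n v hv
    apply ContinuousAt.continuousWithinAt
    apply ContinuousAt.clog
    · fun_prop
    · rw [Complex.mem_slitPlane_iff]
      left
      have h1 : ‖Complex.exp (2 * (Real.pi:ℂ) * I * v) * w ^ (2*n+2)‖ < 1 :=
        lt_of_le_of_lt (le_trans (hble _ (hexp_le v hv) n) (hrpow n)) hr1
      have h2 := Complex.abs_re_le_norm (Complex.exp (2 * (Real.pi:ℂ) * I * v) * w ^ (2*n+2))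
      have h3 := le_abs_self (Complex.exp (2 * (Real.pi:ℂ) * I * v) * w ^ (2*n+2)).re
      simp only [Complex.sub_re, Complex.one_re]
      linarith
  have hScont : ContinuousOn S s :=
    htuo.continuousOn (Filter.Eventually.of_forall fun t =>
      continuousOn_finset_sum t fun n _ => hFcont n).frequently
  have hheq : ∀ v ∈ s, h v = Complex.exp (S v) := by
    intro v hv
    exact (key _ (hexp_le v hv)).2
  have hhcont : ContinuousAt h 0 := by
    have h1 : ContinuousAt (fun v => Complex.exp (S v)) 0 :=
      Complex.continuous_exp.continuousAt.comp (hScont.continuousAt hs_nhds)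
    apply h1.congr
    filter_upwards [hs_nhds] with v hv
    exact (hheq v hv).symm
  have hmulv : ∀ v ∈ s, Multipliable
      (fun n : ℕ => 1 - Complex.exp (2 * (Real.pi:ℂ) * I * v) * w ^ (2*n+2)) :=
    fun v hv => (key _ (hexp_le v hv)).1
  -- the full v-dependent product g
  set g : ℂ → ℂ := fun v => ∏' n : ℕ, ((1 - w ^ (2*n+2)) *
      (1 - Complex.exp (2 * (Real.pi:ℂ) * I * v) * w ^ (2*n+2)) *
      (1 - Complex.exp (-(2 * (Real.pi:ℂ) * I * v)) * w ^ (2*n+2))) with hg_def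
  have hgeq : ∀ v ∈ s, g v = (∏' n : ℕ, (1 - w ^ (2*n+2))) * (h v * h (-v)) := by
    intro v hv
    have hv' := hs_neg v hv
    have e1 : (fun n : ℕ => (1 - w ^ (2*n+2)) *
        (1 - Complex.exp (2 * (Real.pi:ℂ) * I * v) * w ^ (2*n+2)) *
        (1 - Complex.exp (-(2 * (Real.pi:ℂ) * I * v)) * w ^ (2*n+2)))
        = fun n : ℕ => (1 - w ^ (2*n+2)) *
          ((1 - Complex.exp (2 * (Real.pi:ℂ) * I * v) * w ^ (2*n+2)) *
           (1 - Complex.exp (2 * (Real.pi:ℂ) * I * (-v)) * w ^ (2*n+2))) := by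
      funext n
      have : Complex.exp (-(2 * (Real.pi:ℂ) * I * v))
          = Complex.exp (2 * (Real.pi:ℂ) * I * (-v)) := by
        congr 1
        ring
      rw [this]
      ring
    rw [hg_def]
    simp only []
    rw [e1, Multipliable.tprod_mul mP ((hmulv v hv).mul (hmulv (-v) hv')),
      Multipliable.tprod_mul (hmulv v hv) (hmulv (-v) hv')]
  have hgcont : ContinuousAt g 0 := by
    have hneg : ContinuousAt (fun v : ℂ => h (-v)) 0 := by
      have h0 : ContinuousAt h (-(0:ℂ)) := by simpa using hhcont
      exact h0.comp continuous_neg.continuousAt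
    have hc2 : ContinuousAt
        (fun v => (∏' n : ℕ, (1 - w ^ (2*n+2))) * (h v * h (-v))) 0 :=
      continuousAt_const.mul (hhcont.mul hneg)
    apply hc2.congr
    filter_upwards [hs_nhds] with v hv
    exact (hgeq v hv).symm
  -- rewrite jtheta
  have hfeq : (fun v => jtheta v τ)
      = fun v => Complex.sin ((Real.pi:ℂ) * v) * (2 * E * g v) := by
    funext v
    simp only [jtheta, hpow, hg_def, hE_def]
    ring
  -- derivative of sin (π v) at 0
  have hsin : HasDerivAt (fun v : ℂ => Complex.sin ((Real.pi:ℂ) * v)) ((Real.pi:ℂ)) 0 := by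
    have h1 := (Complex.hasDerivAt_sin (((Real.pi:ℂ)) * 0)).comp 0
      ((hasDerivAt_id (0:ℂ)).const_mul ((Real.pi:ℂ)))
    simpa [Function.comp_def] using h1
  have hslope := hasDerivAt_iff_tendsto_slope.mp hsin
  have htendg : Filter.Tendsto (fun v : ℂ => 2 * E * g v) (𝓝[≠] (0:ℂ)) (𝓝 (2 * E * g 0)) :=
    (continuousAt_const.mul hgcont).tendsto.mono_left nhdsWithin_le_nhds
  have hder : HasDerivAt (fun v => jtheta v τ) ((Real.pi:ℂ) * (2 * E * g 0)) 0 := by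
    rw [hfeq, hasDerivAt_iff_tendsto_slope]
    apply (hslope.mul htendg).congr'
    filter_upwards [self_mem_nhdsWithin] with v hv
    have hv0 : v ≠ 0 := hv
    rw [slope_def_field, slope_def_field]
    simp only [mul_zero, Complex.sin_zero, zero_mul, sub_zero]
    field_simp
  rw [hder.deriv]
  -- value of g at 0
  have hg0 : g 0 = (∏' n : ℕ, (1 - w ^ (2*n+2))) *
      ((∏' n : ℕ, (1 - w ^ (2*n+2))) * (∏' n : ℕ, (1 - w ^ (2*n+2)))) := by
    rw [hg_def]
    simp only [mul_zero, neg_zero, Complex.exp_zero, one_mul]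
    rw [Multipliable.tprod_mul (mP.mul mP) mP, Multipliable.tprod_mul mP mP]
    ring
  -- values of the three thetas at 0
  have hθ1 : jtheta1 0 τ = 2 * E * ((∏' n : ℕ, (1 - w ^ (2*n+2))) *
      ((∏' n : ℕ, (1 + w ^ (2*n+2))) * (∏' n : ℕ, (1 + w ^ (2*n+2))))) := by
    simp only [jtheta1, hpow, mul_zero, neg_zero, Complex.exp_zero, one_mul,
      Complex.cos_zero, mul_one, ← hE_def]
    rw [Multipliable.tprod_mul (mP.mul mA) mA, Multipliable.tprod_mul mP mA]
    ring
  have hθ2 : jtheta2 0 τ = (∏' n : ℕ, (1 - w ^ (2*n+2))) *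
      ((∏' n : ℕ, (1 - w ^ (2*n+1))) * (∏' n : ℕ, (1 - w ^ (2*n+1)))) := by
    simp only [jtheta2, hpow, mul_zero, neg_zero, Complex.exp_zero, one_mul, ← hw_def]
    rw [Multipliable.tprod_mul (mP.mul mB) mB, Multipliable.tprod_mul mP mB]
    ring
  have hθ3 : jtheta3 0 τ = (∏' n : ℕ, (1 - w ^ (2*n+2))) *
      ((∏' n : ℕ, (1 + w ^ (2*n+1))) * (∏' n : ℕ, (1 + w ^ (2*n+1)))) := by
    simp only [jtheta3, hpow, mul_zero, neg_zero, Complex.exp_zero, one_mul, ← hw_def]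
    rw [Multipliable.tprod_mul (mP.mul mC) mC, Multipliable.tprod_mul mP mC]
    ring
  rw [hg0, hθ1, hθ2, hθ3]
  have heuler := jac_euler hr1
  linear_combination (2 * (Real.pi:ℂ) * E * (∏' n : ℕ, (1 - w ^ (2*n+2)))^3 *
    (-((∏' n : ℕ, (1 + w ^ (2*n+2))) * (∏' n : ℕ, (1 - w ^ (2*n+1)))
      * (∏' n : ℕ, (1 + w ^ (2*n+1))) + 1))) * heuler
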